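/- Let f : ℝⁿ → ℝⁿ be continuously differentiable with Jacobian Df(x), let λ ≥ 0, ε > 0, and let P be a real symmetric positive definite n×n matrix such that Df(x)ᵀP + P·Df(x) ⪯ −2λP − εI for all x ∈ ℝⁿ. Let μ_max(P) > 0 be the largest eigenvalue of P, and let x, y : [0,∞) → ℝⁿ be differentiable with x′(t) = f(x(t)) and y′(t) = f(y(t)) for all t ≥ 0. Then for every t ≥ 0: V(x(t)−y(t)) ≤ e^(−(2λ + ε/μ_max(P))·t) · V(x(0)−y(0)), where V(z) = zᵀPz; that is, the system is exponentially incrementally contracting in the metric induced by P. -/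

import Mathlib

open Matrix

/-- `M ⪯ N` iff `N - M` is positive semidefinite. -/
def matLE {m : Type*} [Fintype m] (M N : Matrix m m ℝ) : Prop := (N - M).PosSemidef

/-- A real symmetric matrix has inertia `p`: exactly `p` negative eigenvalues,
`card m − p` positive eigenvalues, and no zero eigenvalues, counted with multiplicity
(as roots of the characteristic polynomial). -/
def hasInertia {m : Type*} [Fintype m] [DecidableEq m]
    (P : Matrix m m ℝ) (p : ℕ) : Prop :=
  Multiset.countP (fun μ : ℝ => μ < 0) P.charpoly.roots = p ∧
  Multiset.countP (fun μ : ℝ => 0 < μ) P.charpoly.roots = Fintype.card m - p ∧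
  (0 : ℝ) ∉ P.charpoly.roots

/-- Number of complex eigenvalues (with algebraic multiplicity) of a real matrix
with strictly positive real part. -/
noncomputable def posReCount {m : Type*} [Fintype m] [DecidableEq m]
    (A : Matrix m m ℝ) : ℕ :=
  Multiset.countP (fun μ : ℂ => 0 < μ.re) (A.map Complex.ofReal).charpoly.roots

/-- Number of complex eigenvalues (with algebraic multiplicity) of a real matrix
with strictly negative real part. -/
noncomputable def negReCount {m : Type*} [Fintype m] [DecidableEq m]
    (A : Matrix m m ℝ) : ℕ :=
  Multiset.countP (fun μ : ℂ => μ.re < 0) (A.map Complex.ofReal).charpoly.roots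

/-- The quadratic form `xᵀ P x`. -/
def quadForm {m : Type*} [Fintype m] (P : Matrix m m ℝ) (x : m → ℝ) : ℝ :=
  x ⬝ᵥ P.mulVec x

/-- Euclidean norm on `m → ℝ`. -/
noncomputable def enorm {m : Type*} [Fintype m] (x : m → ℝ) : ℝ :=
  Real.sqrt (x ⬝ᵥ x)

/-- `J` is the Jacobian of `f`. -/
def IsJacobianOf {n : ℕ} (J : (Fin n → ℝ) → Matrix (Fin n) (Fin n) ℝ)
    (f : (Fin n → ℝ) → (Fin n → ℝ)) : Prop :=
  ∀ x, HasFDerivAt f (LinearMap.toContinuousLinearMap ((J x).mulVecLin)) x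

/- ========== auxiliary lemmas ========== -/

/-- Every real spectrum point of a real matrix is a root of its characteristic polynomial. -/
lemma aux_spec_root {m : Type*} [Fintype m] [DecidableEq m] (P : Matrix m m ℝ) (μ : ℝ)
    (h : μ ∈ spectrum ℝ P) : μ ∈ P.charpoly.roots := by
  rw [spectrum.mem_iff] at h
  rw [Matrix.isUnit_iff_isUnit_det, isUnit_iff_ne_zero, not_not] at h
  rw [Polynomial.mem_roots (P.charpoly_monic.ne_zero)]
  rw [Polynomial.IsRoot.def, Matrix.charpoly, eval_det, Matrix.matPolyEquiv_charmatrix]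
  simpa [Polynomial.eval_sub, Matrix.scalar, Matrix.algebraMap_eq_diagonal] using h

/-- Rayleigh-type bound: `zᵀ P z ≤ μmax ‖z‖²` for symmetric `P` with the largest
charpoly root `μmax`. -/
lemma aux_quad_le {m : Type*} [Fintype m] [DecidableEq m] (P : Matrix m m ℝ)
    (hPsymm : P.IsSymm) (μmax : ℝ)
    (hμmax : IsGreatest {μ : ℝ | μ ∈ P.charpoly.roots} μmax) (z : m → ℝ) :
    z ⬝ᵥ P *ᵥ z ≤ μmax * (z ⬝ᵥ z) := by
  set M : Matrix m m ℝ := μmax • (1 : Matrix m m ℝ) - P with hMdef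
  have hMherm : M.IsHermitian := by
    rw [Matrix.IsHermitian, Matrix.conjTranspose_eq_transpose_of_trivial]
    simp [hMdef, Matrix.transpose_sub, Matrix.transpose_smul, hPsymm.eq]
  have hMpsd : M.PosSemidef := by
    apply (Matrix.IsHermitian.posSemidef_iff_eigenvalues_nonneg hMherm).mpr
    intro i
    simp only [Pi.zero_apply]
    have hspec : hMherm.eigenvalues i ∈ spectrum ℝ M := hMherm.eigenvalues_mem_spectrum_real i
    set ν := hMherm.eigenvalues i
    have hP : (μmax - ν) ∈ spectrum ℝ P := by
      rw [spectrum.mem_iff] at hspec ⊢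
      intro hu
      apply hspec
      have : algebraMap ℝ (Matrix m m ℝ) ν - M
          = -(algebraMap ℝ (Matrix m m ℝ) (μmax - ν) - P) := by
        simp [hMdef, Algebra.algebraMap_eq_smul_one, sub_smul]
        abel
      rw [this]
      exact hu.neg
    have := hμmax.2 (aux_spec_root P _ hP)
    linarith
  have h0 := hMpsd.re_dotProduct_nonneg z
  simp only [RCLike.re_to_real, star_trivial] at h0
  have : z ⬝ᵥ M *ᵥ z = μmax * (z ⬝ᵥ z) - z ⬝ᵥ P *ᵥ z := by
    simp [hMdef, Matrix.sub_mulVec, dotProduct_sub, Matrix.smul_mulVec,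
      Matrix.one_mulVec, dotProduct_smul, smul_eq_mul]
  linarith [this ▸ h0]

/-- Derivative of the quadratic form along a differentiable curve. -/
lemma aux_hasDerivAt_quad {m : Type*} [Fintype m] (P : Matrix m m ℝ)
    (z : ℝ → m → ℝ) (z' : m → ℝ) (t : ℝ) (hz : HasDerivAt z z' t) :
    HasDerivAt (fun s => z s ⬝ᵥ P *ᵥ z s)
      (z' ⬝ᵥ P *ᵥ z t + z t ⬝ᵥ P *ᵥ z') t := by
  have hzi : ∀ i, HasDerivAt (fun s => z s i) (z' i) t := hasDerivAt_pi.1 hz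
  have key : HasDerivAt (fun s => ∑ i, z s i * ∑ j, P i j * z s j)
      (∑ i, (z' i * ∑ j, P i j * z t j + z t i * ∑ j, P i j * z' j)) t := by
    apply HasDerivAt.fun_sum
    intro i _
    exact (hzi i).mul (HasDerivAt.fun_sum fun j _ => (hzi j).const_mul (P i j))
  have e1 : (fun s => ∑ i, z s i * ∑ j, P i j * z s j) = fun s => z s ⬝ᵥ P *ᵥ z s := by
    funext s; simp [dotProduct, Matrix.mulVec]
  have e2 : (∑ i, (z' i * ∑ j, P i j * z t j + z t i * ∑ j, P i j * z' j))
      = z' ⬝ᵥ P *ᵥ z t + z t ⬝ᵥ P *ᵥ z' := by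
    simp [dotProduct, Matrix.mulVec, Finset.sum_add_distrib]
  rw [← e1, ← e2]
  exact key

/-- Mean value step: `zᵀP(f a − f b) = zᵀ P J(ξ) z` for some point `ξ` on the segment. -/
lemma aux_mvt_step {n : ℕ} (f : (Fin n → ℝ) → (Fin n → ℝ))
    (J : (Fin n → ℝ) → Matrix (Fin n) (Fin n) ℝ)
    (hJ : ∀ x, HasFDerivAt f (LinearMap.toContinuousLinearMap ((J x).mulVecLin)) x)
    (P : Matrix (Fin n) (Fin n) ℝ) (a b : Fin n → ℝ) :
    ∃ ξ : Fin n → ℝ, (a - b) ⬝ᵥ P *ᵥ (f a - f b)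
      = (a - b) ⬝ᵥ P *ᵥ ((J ξ) *ᵥ (a - b)) := by
  set z : Fin n → ℝ := a - b with hz
  set g : ℝ → Fin n → ℝ := fun s => b + s • z with hg
  have hgderiv : ∀ s : ℝ, HasDerivAt g z s := by
    intro s
    have : HasDerivAt (fun s : ℝ => s • z) ((1:ℝ) • z) s := (hasDerivAt_id s).smul_const z
    have h2 := this.const_add b
    rw [one_smul] at h2
    exact h2
  set h : ℝ → ℝ := fun s => z ⬝ᵥ P *ᵥ f (g s) with hh
  have hfg : ∀ s : ℝ, HasDerivAt (fun u => f (g u)) ((J (g s)) *ᵥ z) s := by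
    intro s
    have := (hJ (g s)).comp_hasDerivAt s (hgderiv s)
    exact this
  have hhderiv : ∀ s : ℝ, HasDerivAt h (z ⬝ᵥ P *ᵥ ((J (g s)) *ᵥ z)) s := by
    intro s
    have hco : ∀ j, HasDerivAt (fun u => f (g u) j) (((J (g s)) *ᵥ z) j) s :=
      hasDerivAt_pi.1 (hfg s)
    have key : HasDerivAt (fun u => ∑ i, z i * ∑ j, P i j * f (g u) j)
        (∑ i, z i * ∑ j, P i j * ((J (g s)) *ᵥ z) j) s := by
      apply HasDerivAt.fun_sum
      intro i _
      exact (HasDerivAt.fun_sum fun j _ => (hco j).const_mul (P i j)).const_mul (z i)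
    have e1 : (fun u => ∑ i, z i * ∑ j, P i j * f (g u) j) = h := by
      funext u; simp [hh, dotProduct, Matrix.mulVec]
    have e2 : (∑ i, z i * ∑ j, P i j * ((J (g s)) *ᵥ z) j)
        = z ⬝ᵥ P *ᵥ ((J (g s)) *ᵥ z) := by
      simp [dotProduct, Matrix.mulVec]
    rw [← e1, ← e2]; exact key
  obtain ⟨c, _, hc⟩ := exists_hasDerivAt_eq_slope h (fun s => z ⬝ᵥ P *ᵥ ((J (g s)) *ᵥ z))
    (by norm_num : (0:ℝ) < 1)
    (fun s _ => (hhderiv s).continuousAt.continuousWithinAt)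
    (fun s _ => hhderiv s)
  refine ⟨g c, ?_⟩
  have hg1 : g 1 = a := by simp [hg, hz]
  have hg0 : g 0 = b := by simp [hg]
  have hdiff : h 1 - h 0 = z ⬝ᵥ P *ᵥ (f a - f b) := by
    simp [hh, hg1, hg0, Matrix.mulVec_sub, dotProduct_sub]
  rw [← hz] at *
  rw [← hdiff, hc]; ring

/-- exponential incremental contraction in the metric induced by a
positive definite storage P. -/
theorem exponential_incremental_contraction {n : ℕ}
    (f : (Fin n → ℝ) → (Fin n → ℝ)) (J : (Fin n → ℝ) → Matrix (Fin n) (Fin n) ℝ)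
    (hf : ContDiff ℝ 1 f) (hJ : IsJacobianOf J f)
    (P : Matrix (Fin n) (Fin n) ℝ) (hPsymm : P.IsSymm) (hPpos : P.PosDef)
    (lam eps μmax : ℝ) (hlam : 0 ≤ lam) (heps : 0 < eps)
    (hμmax : IsGreatest {μ : ℝ | μ ∈ P.charpoly.roots} μmax) (hμmaxpos : 0 < μmax)
    (hLMI : ∀ x : Fin n → ℝ, matLE ((J x)ᵀ * P + P * J x)
      (-((2 * lam) • P) - eps • (1 : Matrix (Fin n) (Fin n) ℝ)))
    (x y : ℝ → Fin n → ℝ)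
    (hx : ∀ t : ℝ, 0 ≤ t → HasDerivAt x (f (x t)) t)
    (hy : ∀ t : ℝ, 0 ≤ t → HasDerivAt y (f (y t)) t) :
    ∀ t : ℝ, 0 ≤ t →
      quadForm P (x t - y t)
        ≤ Real.exp (-(2 * lam + eps / μmax) * t) * quadForm P (x 0 - y 0) := by
  set α : ℝ := 2 * lam + eps / μmax with hα
  set z : ℝ → Fin n → ℝ := fun t => x t - y t with hzdef
  set V : ℝ → ℝ := fun t => z t ⬝ᵥ P *ᵥ z t with hVdef
  -- symmetry of the inner product induced by P
  have hsd : ∀ u v : Fin n → ℝ, u ⬝ᵥ P *ᵥ v = v ⬝ᵥ P *ᵥ u := by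
    intro u v
    calc u ⬝ᵥ P *ᵥ v = (u ᵥ* P) ⬝ᵥ v := Matrix.dotProduct_mulVec u P v
    _ = (u ᵥ* Pᵀ) ⬝ᵥ v := by rw [hPsymm.eq]
    _ = (P *ᵥ u) ⬝ᵥ v := by rw [Matrix.vecMul_transpose]
    _ = v ⬝ᵥ P *ᵥ u := dotProduct_comm _ _
  -- pointwise derivative bound
  have hV : ∀ t : ℝ, 0 ≤ t → ∃ D : ℝ, HasDerivAt V D t ∧ D ≤ -α * V t := by
    intro t ht
    have hzder : HasDerivAt z (f (x t) - f (y t)) t := (hx t ht).sub (hy t ht)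
    set w : Fin n → ℝ := f (x t) - f (y t) with hw
    refine ⟨w ⬝ᵥ P *ᵥ z t + z t ⬝ᵥ P *ᵥ w, aux_hasDerivAt_quad P z w t hzder, ?_⟩
    obtain ⟨ξ, hξ⟩ := aux_mvt_step f J hJ P (x t) (y t)
    set A : Matrix (Fin n) (Fin n) ℝ := J ξ with hA
    have hmv : z t ⬝ᵥ P *ᵥ w = z t ⬝ᵥ P *ᵥ (A *ᵥ z t) := hξ
    -- the quadratic form of AᵀP + PA
    have hquad : z t ⬝ᵥ (Aᵀ * P + P * A) *ᵥ z t = 2 * (z t ⬝ᵥ P *ᵥ (A *ᵥ z t)) := by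
      rw [Matrix.add_mulVec, dotProduct_add, ← Matrix.mulVec_mulVec,
        ← Matrix.mulVec_mulVec]
      rw [Matrix.dotProduct_mulVec (z t) Aᵀ, Matrix.vecMul_transpose]
      rw [hsd (A *ᵥ z t) (z t)]
      ring
    -- LMI bound
    have hLMIξ := (hLMI ξ).re_dotProduct_nonneg (z t)
    simp only [RCLike.re_to_real, star_trivial] at hLMIξ
    have hLMI2 : z t ⬝ᵥ (Aᵀ * P + P * A) *ᵥ z t
        ≤ -(2 * lam) * (z t ⬝ᵥ P *ᵥ z t) - eps * (z t ⬝ᵥ z t) := by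
      have hrw : z t ⬝ᵥ ((-((2 * lam) • P) - eps • (1 : Matrix (Fin n) (Fin n) ℝ))
            - (Aᵀ * P + P * A)) *ᵥ z t
          = -(2 * lam) * (z t ⬝ᵥ P *ᵥ z t) - eps * (z t ⬝ᵥ z t)
            - z t ⬝ᵥ (Aᵀ * P + P * A) *ᵥ z t := by
        simp [Matrix.sub_mulVec, dotProduct_sub, Matrix.neg_mulVec,
          Matrix.smul_mulVec, Matrix.one_mulVec, dotProduct_smul,
          dotProduct_neg, smul_eq_mul]
        try ring
      rw [hrw] at hLMIξ
      linarith
    -- Rayleigh bound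
    have hray : z t ⬝ᵥ P *ᵥ z t ≤ μmax * (z t ⬝ᵥ z t) :=
      aux_quad_le P hPsymm μmax hμmax (z t)
    have hepsd : 0 < eps / μmax := div_pos heps hμmaxpos
    have hray2 : (eps / μmax) * (z t ⬝ᵥ P *ᵥ z t) ≤ eps * (z t ⬝ᵥ z t) := by
      calc (eps / μmax) * (z t ⬝ᵥ P *ᵥ z t) ≤ (eps / μmax) * (μmax * (z t ⬝ᵥ z t)) := by
            exact mul_le_mul_of_nonneg_left hray (le_of_lt hepsd)
      _ = eps * (z t ⬝ᵥ z t) := by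
            rw [← mul_assoc, div_mul_cancel₀ _ (ne_of_gt hμmaxpos)]
    have hD : w ⬝ᵥ P *ᵥ z t + z t ⬝ᵥ P *ᵥ w = z t ⬝ᵥ (Aᵀ * P + P * A) *ᵥ z t := by
      rw [hsd w (z t), hmv, hquad]; ring
    rw [hD]
    have : V t = z t ⬝ᵥ P *ᵥ z t := rfl
    rw [this, hα]
    linarith
  -- Gronwall via antitonicity of W(t) = exp(αt) V(t)
  set W : ℝ → ℝ := fun t => Real.exp (α * t) * V t with hWdef
  have hexp : ∀ t : ℝ, HasDerivAt (fun s => Real.exp (α * s)) (Real.exp (α * t) * α) t := by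
    intro t
    have h1 : HasDerivAt (fun s : ℝ => α * s) α t := by
      simpa using (hasDerivAt_id t).const_mul α
    exact (Real.hasDerivAt_exp (α * t)).comp t h1
  have hanti : AntitoneOn W (Set.Ici (0:ℝ)) := by
    apply antitoneOn_of_deriv_nonpos (convex_Ici 0)
    · intro t ht
      obtain ⟨D, hD, _⟩ := hV t ht
      exact (((hexp t).mul hD).continuousAt).continuousWithinAt
    · intro t ht
      rw [interior_Ici] at ht
      obtain ⟨D, hD, _⟩ := hV t (le_of_lt ht)
      exact (((hexp t).mul hD).differentiableAt).differentiableWithinAt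
    · intro t ht
      rw [interior_Ici] at ht
      obtain ⟨D, hD, hDle⟩ := hV t (le_of_lt ht)
      have hW : HasDerivAt W (Real.exp (α * t) * α * V t + Real.exp (α * t) * D) t :=
        (hexp t).mul hD
      rw [hW.deriv]
      have hep : (0:ℝ) < Real.exp (α * t) := Real.exp_pos _
      nlinarith [mul_le_mul_of_nonneg_left hDle (le_of_lt hep)]
  intro t ht
  have hWle : W t ≤ W 0 := hanti (Set.self_mem_Ici) ht ht
  have hW0 : W 0 = V 0 := by simp [hWdef]
  have hgoal : V t ≤ Real.exp (-α * t) * V 0 := by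
    have h1 : Real.exp (α * t) * V t ≤ V 0 := by rw [← hW0]; exact hWle
    have h2 := mul_le_mul_of_nonneg_left h1 (le_of_lt (Real.exp_pos (-α * t)))
    calc V t = Real.exp (-α * t) * (Real.exp (α * t) * V t) := by
          rw [← mul_assoc, ← Real.exp_add]; simp
    _ ≤ Real.exp (-α * t) * V 0 := h2
  exact hgoal
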